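/- For every integer n ≥ 2, the commutator subgroup [G_n, G_n] of the crystallographic group G_n of holonomy n is contained in the translation subgroup {1} ⋉ ℤ^{n-1} and equals the subgroup corresponding to the subgroup of ℤ^{n-1} generated by the elements -e_i + e_{i+1} for 1 ≤ i ≤ n-2 together with -(e₁ + ⋯ + e_{n-2}) - 2·e_{n-1}; moreover [G_n, G_n] is free abelian of rank n-1 (in particular G_n is metabelian). -/

import Mathlib

open Multiplicative
open scoped commutatorElement

section Aux
variable {n : ℕ}
variable (φ : Multiplicative (ZMod n) →* MulAut (Multiplicative (Fin (n - 1) → ℤ)))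

def xiHom : (Fin (n-1) → ℤ) →+ (Fin (n-1) → ℤ) where
  toFun v := toAdd (φ (ofAdd 1) (ofAdd v))
  map_zero' := by simp
  map_add' a b := by simp [ofAdd_add]

def LHom : (Fin (n-1) → ℤ) →+ (Fin (n-1) → ℤ) := xiHom φ - AddMonoidHom.id _

lemma LHom_apply (v : Fin (n-1) → ℤ) : LHom φ v = xiHom φ v - v := rfl

def Sset (n : ℕ) : Set (Fin (n-1) → ℤ) :=
  {v | ∃ i j : Fin (n - 1), (j : ℕ) = (i : ℕ) + 1 ∧
      v = -Pi.single i 1 + Pi.single j 1} ∪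
  {v | ∃ l : Fin (n - 1), (l : ℕ) = n - 2 ∧
      v = -(∑ i ∈ Finset.univ.filter (fun i => i ≠ l), Pi.single i 1) -
          2 • Pi.single l 1}

def Tset (n : ℕ) : Set (Fin (n-1) → ℤ) := Set.range (fun i => Pi.single i 1)

variable (hn : 2 ≤ n)
  (hφ : ∀ i j : Fin (n - 1), (j : ℕ) = (i : ℕ) + 1 →
      φ (ofAdd 1) (ofAdd (Pi.single i 1)) = ofAdd (Pi.single j 1))
  (hφlast : ∀ i : Fin (n - 1), (i : ℕ) = n - 2 →
      φ (ofAdd 1) (ofAdd (Pi.single i 1)) = (∏ j : Fin (n - 1), ofAdd (Pi.single j 1))⁻¹)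

include hφ in
lemma xi_single (i j : Fin (n-1)) (hij : (j : ℕ) = (i : ℕ) + 1) :
    xiHom φ (Pi.single i 1) = Pi.single j 1 := by
  have h := hφ i j hij
  simp only [xiHom, AddMonoidHom.coe_mk, ZeroHom.coe_mk, h, toAdd_ofAdd]

include hφlast in
lemma xi_last (l : Fin (n-1)) (hl : (l : ℕ) = n - 2) :
    xiHom φ (Pi.single l 1) = -∑ j, Pi.single j 1 := by
  have h := hφlast l hl
  simp only [xiHom, AddMonoidHom.coe_mk, ZeroHom.coe_mk, h, toAdd_inv, toAdd_prod, toAdd_ofAdd]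

lemma sum_split (l : Fin (n-1)) :
    (∑ j, Pi.single j (1:ℤ)) =
      (∑ i ∈ Finset.univ.filter (fun i => i ≠ l), Pi.single i 1) + Pi.single l 1 := by
  rw [Finset.filter_ne', Finset.sum_erase_add]
  exact Finset.mem_univ l

include hn hφ hφlast in
lemma Sset_eq_image : Sset n = (LHom φ) '' (Tset n) := by
  ext v
  constructor
  · rintro (⟨i, j, hij, rfl⟩ | ⟨l, hl, rfl⟩)
    · refine ⟨Pi.single i 1, ⟨i, rfl⟩, ?_⟩
      rw [LHom_apply, xi_single φ hφ i j hij]; abel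
    · refine ⟨Pi.single l 1, ⟨l, rfl⟩, ?_⟩
      rw [LHom_apply, xi_last φ hφlast l hl, sum_split l]; abel
  · rintro ⟨-, ⟨i, rfl⟩, rfl⟩
    rcases Nat.lt_or_ge ((i:ℕ)+1) (n-1) with h | h
    · exact Or.inl ⟨i, ⟨(i:ℕ)+1, h⟩, rfl, by
        rw [LHom_apply, xi_single φ hφ i ⟨(i:ℕ)+1, h⟩ rfl]; abel⟩
    · have hi : (i:ℕ) = n - 2 := by have := i.isLt; omega
      exact Or.inr ⟨i, hi, by
        rw [LHom_apply, xi_last φ hφlast i hi, sum_split i]; abel⟩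

lemma closure_Tset : AddSubgroup.closure (Tset n) = ⊤ := by
  rw [eq_top_iff]
  intro v _
  have hv : v = ∑ i, Pi.single i (v i) := (Finset.univ_sum_single v).symm
  rw [hv]
  refine AddSubgroup.sum_mem _ fun i _ => ?_
  have : Pi.single i (v i) = (v i • (Pi.single i 1 : Fin (n-1) → ℤ)) := by
    ext k; simp [Pi.single_apply]
  rw [this]
  exact AddSubgroup.zsmul_mem _ (AddSubgroup.subset_closure (show Pi.single i (1:ℤ) ∈ Tset n from ⟨i, rfl⟩)) _

include hn hφ hφlast in
lemma LHom_range : (LHom φ).range = AddSubgroup.closure (Sset n) := by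
  rw [AddMonoidHom.range_eq_map, ← closure_Tset (n := n), AddMonoidHom.map_closure,
    ← Sset_eq_image φ hn hφ hφlast]

end Aux

section Aux2
variable {n : ℕ}
variable (xiHom : (Fin (n-1) → ℤ) →+ (Fin (n-1) → ℤ))
variable (hn : 2 ≤ n)
  (hxi : ∀ i j : Fin (n-1), (j : ℕ) = (i : ℕ) + 1 → xiHom (Pi.single i 1) = Pi.single j 1)
  (hxl : ∀ l : Fin (n-1), (l : ℕ) = n - 2 → xiHom (Pi.single l 1) = -∑ j, Pi.single j 1)

include hn hxi hxl in
lemma xi_apply (v : Fin (n-1) → ℤ) (j : Fin (n-1)) :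
    xiHom v j = (if h : (j:ℕ) = 0 then 0 else v ⟨(j:ℕ)-1, by have := j.isLt; omega⟩)
      - v ⟨n-2, by omega⟩ := by
  have hm : n - 2 < n - 1 := by omega
  set l : Fin (n-1) := ⟨n-2, hm⟩ with hldef
  have step1 : xiHom v j = ∑ i, v i * (xiHom (Pi.single i 1)) j := by
    conv_lhs => rw [← Finset.univ_sum_single v, map_sum, Finset.sum_apply]
    refine Finset.sum_congr rfl fun i _ => ?_
    have : Pi.single i (v i) = (v i • (Pi.single i 1 : Fin (n-1) → ℤ)) := by
      ext k; simp [Pi.single_apply]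
    rw [this, map_zsmul, Pi.smul_apply, smul_eq_mul]
  rw [step1, ← Finset.sum_erase_add _ _ (Finset.mem_univ l)]
  have hlast : (xiHom (Pi.single l 1)) j = -1 := by
    rw [hxl l rfl]
    simp only [Pi.neg_apply, Finset.sum_apply, neg_inj]
    simp [Pi.single_apply]
  rw [hlast]
  have herase : ∑ i ∈ Finset.univ.erase l, v i * (xiHom (Pi.single i 1)) j
      = (if h : (j:ℕ) = 0 then 0 else v ⟨(j:ℕ)-1, by have := j.isLt; omega⟩) := by
    have hterm : ∀ i ∈ Finset.univ.erase l,
        v i * (xiHom (Pi.single i 1)) j = v i * (if (j:ℕ) = (i:ℕ)+1 then 1 else 0) := by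
      intro i hi
      have hil : i ≠ l := Finset.ne_of_mem_erase hi
      have hi2 : (i:ℕ) + 1 < n - 1 := by
        have h1 := i.isLt
        have : (i:ℕ) ≠ n-2 := fun h => hil (Fin.ext h)
        omega
      rw [hxi i ⟨(i:ℕ)+1, hi2⟩ rfl]
      congr 1
      rw [Pi.single_apply]
      simp [Fin.ext_iff]
    rw [Finset.sum_congr rfl hterm]
    by_cases hj : (j:ℕ) = 0
    · rw [dif_pos hj]
      refine Finset.sum_eq_zero fun i _ => ?_
      rw [if_neg (by omega), mul_zero]
    · rw [dif_neg hj]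
      have hjlt := j.isLt
      have hmem : (⟨(j:ℕ)-1, by omega⟩ : Fin (n-1)) ∈ Finset.univ.erase l := by
        refine Finset.mem_erase.2 ⟨?_, Finset.mem_univ _⟩
        intro h
        simp only [Fin.ext_iff, Fin.val_mk] at h
        have hl' : (l:ℕ) = n - 2 := rfl
        omega
      rw [Finset.sum_eq_single_of_mem _ hmem]
      · rw [if_pos (by simp only [Fin.val_mk]; omega), mul_one]
      · intro i _ hne
        rw [if_neg (fun h => hne (Fin.ext (by simp only [Fin.val_mk] at h ⊢; omega))), mul_zero]
  rw [herase]; ring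

include hn hxi hxl in
lemma xi_fixed_eq_zero (v : Fin (n-1) → ℤ) (hv : xiHom v = v) : v = 0 := by
  have hm : n - 2 < n - 1 := by omega
  have hcomp : ∀ j : Fin (n-1), v j =
      (if h : (j:ℕ) = 0 then 0 else v ⟨(j:ℕ)-1, by have := j.isLt; omega⟩) - v ⟨n-2, hm⟩ := by
    intro j
    conv_lhs => rw [← hv]
    exact xi_apply xiHom hn hxi hxl v j
  have key : ∀ k (hk : k < n-1), v ⟨k, hk⟩ = -((k:ℤ)+1) * v ⟨n-2, hm⟩ := by
    intro k
    induction k with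
    | zero => intro hk; rw [hcomp ⟨0, hk⟩]; simp
    | succ k ih =>
      intro hk
      rw [hcomp ⟨k+1, hk⟩]
      simp only [Fin.val_mk, Nat.add_sub_cancel, Nat.succ_ne_zero, dif_neg, not_false_iff]
      rw [ih (by omega)]
      push_cast; ring
  have hc : v ⟨n-2, hm⟩ = 0 := by
    have h2 := key (n-2) hm
    have hN : (0:ℤ) ≤ ((n-2:ℕ):ℤ) := Int.natCast_nonneg _
    have h3 : (((n-2:ℕ):ℤ) + 2) * v ⟨n-2, hm⟩ = 0 := by linear_combination h2
    rcases mul_eq_zero.1 h3 with h | h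
    · exfalso; omega
    · exact h
  funext j
  have := key (j:ℕ) j.isLt
  rw [Fin.eta] at this
  rw [this, hc, mul_zero, Pi.zero_apply]

end Aux2

section Aux3
variable {n : ℕ}
variable (φ : Multiplicative (ZMod n) →* MulAut (Multiplicative (Fin (n - 1) → ℤ)))
variable (K : AddSubgroup (Fin (n-1) → ℤ))
variable (hn : 2 ≤ n)
  (hK : ∀ v : Fin (n-1) → ℤ, toAdd (φ (ofAdd 1) (ofAdd v)) - v ∈ K)

include hK in
lemma pow_sub_mem (d : ℕ) (v : Fin (n-1) → ℤ) :
    toAdd ((φ (ofAdd 1) ^ d) (ofAdd v)) - v ∈ K := by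
  induction d with
  | zero => simpa using zero_mem K
  | succ d ih =>
    rw [pow_succ']
    have h1 : (φ (ofAdd 1) * φ (ofAdd 1) ^ d) (ofAdd v)
        = φ (ofAdd 1) (ofAdd (toAdd ((φ (ofAdd 1) ^ d) (ofAdd v)))) := by
      simp [MulAut.mul_apply]
    rw [h1]
    have := hK (toAdd ((φ (ofAdd 1) ^ d) (ofAdd v)))
    have h3 := add_mem this ih
    simpa using h3

include hn hK in
lemma any_sub_mem (c : Multiplicative (ZMod n)) (x : Multiplicative (Fin (n-1) → ℤ)) :
    toAdd (φ c x) - toAdd x ∈ K := by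
  haveI : NeZero n := ⟨by omega⟩
  have hc : c = (ofAdd (1 : ZMod n)) ^ (toAdd c).val := by
    rw [← ofAdd_nsmul]
    rw [nsmul_eq_mul, mul_one]
    rw [ZMod.natCast_val, ZMod.cast_id]
    rfl
  rw [hc, map_pow]
  have := pow_sub_mem φ K hK (toAdd c).val (toAdd x)
  simpa using this

include hn hK in
lemma comm_left_mem (g h : Multiplicative (Fin (n - 1) → ℤ) ⋊[φ] Multiplicative (ZMod n)) :
    toAdd (⁅g, h⁆.left) ∈ K := by
  have hL : ⁅g, h⁆.left =
      g.left * (φ g.right) h.left * (φ h.right) g.left⁻¹ * h.left⁻¹ := by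
    simp only [commutatorElement_def, SemidirectProduct.mul_left, SemidirectProduct.inv_left,
      SemidirectProduct.mul_right, SemidirectProduct.inv_right]
    rw [← MulAut.mul_apply, ← map_mul, ← MulAut.mul_apply, ← map_mul]
    have e1 : g.right * h.right * g.right⁻¹ = h.right := by
      rw [mul_comm g.right h.right, mul_inv_cancel_right]
    rw [e1]
    simp
  rw [hL]
  have hmem := sub_mem (any_sub_mem φ K hn hK g.right h.left)
    (any_sub_mem φ K hn hK h.right g.left)
  have : toAdd (g.left * (φ g.right) h.left * (φ h.right) g.left⁻¹ * h.left⁻¹)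
      = (toAdd ((φ g.right) h.left) - toAdd h.left)
        - (toAdd ((φ h.right) g.left) - toAdd g.left) := by
    simp only [toAdd_mul, toAdd_inv, map_inv]
    abel
  rw [this]
  exact hmem

lemma comm_right_one (g h : Multiplicative (Fin (n - 1) → ℤ) ⋊[φ] Multiplicative (ZMod n)) :
    ⁅g, h⁆.right = 1 := by
  simp [commutatorElement_def]

lemma inr_comm_inl (t : Multiplicative (ZMod n)) (a : Multiplicative (Fin (n-1) → ℤ)) :
    ⁅SemidirectProduct.inr (φ := φ) t, SemidirectProduct.inl a⁆
      = SemidirectProduct.inl (φ := φ) (φ t a * a⁻¹) := by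
  ext
  · simp [commutatorElement_def]
  · simp [commutatorElement_def]

end Aux3

lemma mem_toSubgroup' {A : Type*} [AddGroup A] (K : AddSubgroup A) (x : Multiplicative A) :
    x ∈ AddSubgroup.toSubgroup K ↔ toAdd x ∈ K := Iff.rfl

/-- the identity-carried equivalence -/
def multEquivToSubgroup {A : Type*} [AddGroup A] (K : AddSubgroup A) :
    Multiplicative ↥K ≃* ↥(AddSubgroup.toSubgroup K) where
  toFun x := ⟨ofAdd (toAdd x).1, (toAdd x).2⟩
  invFun y := ofAdd ⟨toAdd y.1, y.2⟩
  left_inv _ := rfl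
  right_inv _ := rfl
  map_mul' _ _ := rfl

theorem crystallographic_commutator (n : ℕ) (hn : 2 ≤ n)
    (φ : Multiplicative (ZMod n) →* MulAut (Multiplicative (Fin (n - 1) → ℤ)))
    (hφ : ∀ i j : Fin (n - 1), (j : ℕ) = (i : ℕ) + 1 →
      φ (ofAdd 1) (ofAdd (Pi.single i 1)) = ofAdd (Pi.single j 1))
    (hφlast : ∀ i : Fin (n - 1), (i : ℕ) = n - 2 →
      φ (ofAdd 1) (ofAdd (Pi.single i 1)) = (∏ j : Fin (n - 1), ofAdd (Pi.single j 1))⁻¹) :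
    commutator (Multiplicative (Fin (n - 1) → ℤ) ⋊[φ] Multiplicative (ZMod n)) ≤
        SemidirectProduct.inl.range ∧
    commutator (Multiplicative (Fin (n - 1) → ℤ) ⋊[φ] Multiplicative (ZMod n)) =
      Subgroup.map SemidirectProduct.inl
        (AddSubgroup.toSubgroup (AddSubgroup.closure
          ({v | ∃ i j : Fin (n - 1), (j : ℕ) = (i : ℕ) + 1 ∧
              v = -Pi.single i 1 + Pi.single j 1} ∪
           {v | ∃ l : Fin (n - 1), (l : ℕ) = n - 2 ∧
              v = -(∑ i ∈ Finset.univ.filter (fun i => i ≠ l), Pi.single i 1) -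
                  2 • Pi.single l 1}))) ∧
    Nonempty ((commutator (Multiplicative (Fin (n - 1) → ℤ) ⋊[φ] Multiplicative (ZMod n))) ≃*
      Multiplicative (Fin (n - 1) → ℤ)) ∧
    (∀ x y : commutator (Multiplicative (Fin (n - 1) → ℤ) ⋊[φ] Multiplicative (ZMod n)),
      x * y = y * x) := by
  have hxi := xi_single φ hφ
  have hxl := xi_last φ hφlast
  set K : AddSubgroup (Fin (n-1) → ℤ) := AddSubgroup.closure (Sset n) with hKdef
  have hKR : (LHom φ).range = K := LHom_range φ hn hφ hφlast
  have hKmem : ∀ v, toAdd (φ (ofAdd 1) (ofAdd v)) - v ∈ K := by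
    intro v
    have h1 : toAdd (φ (ofAdd 1) (ofAdd v)) - v = LHom φ v := rfl
    rw [h1, ← hKR]
    exact ⟨v, rfl⟩
  -- part 1
  have part1 : commutator (Multiplicative (Fin (n - 1) → ℤ) ⋊[φ] Multiplicative (ZMod n)) ≤
      SemidirectProduct.inl.range := by
    rw [SemidirectProduct.range_inl_eq_ker_rightHom]
    exact Abelianization.commutator_subset_ker _
  -- part 2
  have part2 : commutator (Multiplicative (Fin (n - 1) → ℤ) ⋊[φ] Multiplicative (ZMod n)) =
      Subgroup.map SemidirectProduct.inl (AddSubgroup.toSubgroup K) := by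
    apply le_antisymm
    · rw [commutator_def, Subgroup.commutator_le]
      intro g _ h _
      refine Subgroup.mem_map.2 ⟨ofAdd (toAdd ⁅g, h⁆.left), ?_, ?_⟩
      · rw [mem_toSubgroup']
        simpa using comm_left_mem φ K hn hKmem g h
      · refine SemidirectProduct.ext ?_ ?_
        · rfl
        · exact (comm_right_one φ g h).symm
    · intro x hx
      obtain ⟨y, hy, rfl⟩ := Subgroup.mem_map.1 hx
      have hy' : toAdd y ∈ AddSubgroup.closure (Sset n) := (mem_toSubgroup' K y).1 hy
      have main : ∀ v ∈ AddSubgroup.closure (Sset n),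
          SemidirectProduct.inl (φ := φ) (ofAdd v) ∈
            commutator (Multiplicative (Fin (n - 1) → ℤ) ⋊[φ] Multiplicative (ZMod n)) := by
        intro v hv
        induction hv using AddSubgroup.closure_induction with
        | mem s hs =>
          rw [Sset_eq_image φ hn hφ hφlast] at hs
          obtain ⟨u, -, rfl⟩ := hs
          have heq : SemidirectProduct.inl (φ := φ) (ofAdd (LHom φ u)) =
              ⁅SemidirectProduct.inr (φ := φ) (ofAdd 1), SemidirectProduct.inl (ofAdd u)⁆ := by
            rw [inr_comm_inl]
            congr 1
          rw [heq, commutator_def]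
          exact Subgroup.commutator_mem_commutator (Subgroup.mem_top _) (Subgroup.mem_top _)
        | zero =>
          simpa using one_mem _
        | add a b ha hb iha ihb =>
          rw [ofAdd_add, map_mul]
          exact mul_mem iha ihb
        | neg a ha iha =>
          rw [ofAdd_neg, map_inv]
          exact inv_mem iha
      simpa using main (toAdd y) hy'
  refine ⟨part1, part2, ?_, ?_⟩
  · -- part 3
    have hinj : Function.Injective (LHom φ) := by
      rw [injective_iff_map_eq_zero]
      intro v hv
      have : xiHom φ v = v := by
        have := sub_eq_zero.1 (LHom_apply φ v ▸ hv)
        exact this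
      exact xi_fixed_eq_zero (xiHom φ) hn hxi hxl v this
    have e0 : (Fin (n-1) → ℤ) ≃+ (LHom φ).range := AddMonoidHom.ofInjective hinj
    have e0' : (Fin (n-1) → ℤ) ≃+ ↥K := hKR ▸ e0
    rw [part2]
    exact ⟨((Subgroup.equivMapOfInjective (AddSubgroup.toSubgroup K) SemidirectProduct.inl
      SemidirectProduct.inl_injective).symm.trans
      (multEquivToSubgroup K).symm).trans (AddEquiv.toMultiplicative e0').symm⟩
  · -- part 4
    intro x y
    obtain ⟨a, ha⟩ := part1 x.2
    obtain ⟨b, hb⟩ := part1 y.2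
    apply Subtype.ext
    rw [Subgroup.coe_mul, Subgroup.coe_mul, ← ha, ← hb, ← map_mul, ← map_mul, mul_comm]
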